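/- For 2 ≤ d < k and n sufficiently large, |A(k,d)| ≤ |B(k,d)| ≤ |H(k,d)| whenever 2d < k, with equalities if and only if k = 3 and d = 2. -/

import Mathlib

open Finset


-- counting fiber lemma
lemma count_fiber (n k : ℕ) (S T : Finset ℕ) (hST : S ⊆ T) (hT : T ⊆ Finset.Icc 1 n)
    (hSk : S.card ≤ k) :
    (((Finset.Icc 1 n).powersetCard k).filter (fun A => A ∩ T = S)).card
      = (n - T.card).choose (k - S.card) := by
  have key : (((Finset.Icc 1 n).powersetCard k).filter (fun A => A ∩ T = S)).card
      = ((Finset.Icc 1 n \ T).powersetCard (k - S.card)).card := by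
    apply Finset.card_nbij' (fun A => A \ T) (fun B => B ∪ S)
    · intro A hA
      simp only [Finset.mem_coe, Finset.mem_filter, Finset.mem_powersetCard] at hA ⊢
      obtain ⟨⟨hAsub, hAcard⟩, hAT⟩ := hA
      refine ⟨Finset.sdiff_subset_sdiff hAsub (le_refl _), ?_⟩
      have h1 : A \ T = A \ S := by rw [← hAT, Finset.sdiff_inter_self_left]
      have hSA : S ⊆ A := hAT ▸ Finset.inter_subset_left
      rw [h1, Finset.card_sdiff_of_subset hSA, hAcard]
    · intro B hB
      simp only [Finset.mem_coe, Finset.mem_filter, Finset.mem_powersetCard] at hB ⊢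
      obtain ⟨hBsub, hBcard⟩ := hB
      have hBT : ∀ x ∈ B, x ∉ T := fun x hx => (Finset.mem_sdiff.mp (hBsub hx)).2
      have hdisj : Disjoint B S := by
        rw [Finset.disjoint_left]; exact fun a ha ha' => hBT a ha (hST ha')
      refine ⟨⟨?_, ?_⟩, ?_⟩
      · intro x hx
        rcases Finset.mem_union.mp hx with h | h
        · exact (Finset.mem_sdiff.mp (hBsub h)).1
        · exact hT (hST h)
      · rw [Finset.card_union_of_disjoint hdisj, hBcard]; omega
      · ext x
        simp only [Finset.mem_inter, Finset.mem_union]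
        constructor
        · rintro ⟨h | h, hxT⟩
          · exact absurd hxT (hBT x h)
          · exact h
        · exact fun h => ⟨Or.inr h, hST h⟩
    · intro A hA
      simp only [Finset.mem_coe, Finset.mem_filter, Finset.mem_powersetCard] at hA
      obtain ⟨⟨hAsub, hAcard⟩, hAT⟩ := hA
      rw [← hAT]; simp only [Finset.sdiff_union_inter]
    · intro B hB
      simp only [Finset.mem_coe, Finset.mem_powersetCard, Finset.mem_sdiff] at hB
      obtain ⟨hBsub, hBcard⟩ := hB
      have hBT : ∀ x ∈ B, x ∉ T := fun x hx => (Finset.mem_sdiff.mp (hBsub hx)).2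
      ext x
      simp only [Finset.mem_sdiff, Finset.mem_union]
      constructor
      · rintro ⟨h | h, hxT⟩
        · exact h
        · exact absurd (hST h) hxT
      · exact fun h => ⟨Or.inl h, hBT x h⟩
  rw [key, Finset.card_powersetCard, Finset.card_sdiff_of_subset hT, Nat.card_Icc]
  norm_num

-- choose add lemma
lemma choose_add_le (g M s : ℕ) : M.choose (s+1) + g * M.choose s ≤ (M+g).choose (s+1) := by
  induction g with
  | zero => simp
  | succ g ih =>
    have h1 : (M+(g+1)).choose (s+1) = (M+g).choose s + (M+g).choose (s+1) := by
      have : M + (g+1) = (M+g) + 1 := by ring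
      rw [this, Nat.choose_succ_succ]
    have h2 : M.choose s ≤ (M+g).choose s := Nat.choose_le_choose s (by omega)
    have h3 : (g+1) * M.choose s = g * M.choose s + M.choose s := by ring
    omega

-- power bound
lemma pow_add_le_aux (c m : ℕ) : ∀ s : ℕ, (m+c)^(s+1) ≤ m^(s+1) + (s+1)*c*(m+c)^s := by
  intro s
  induction s with
  | zero => simp
  | succ s ih =>
    have hm : m^(s+1) ≤ (m+c)^(s+1) := Nat.pow_le_pow_left (by omega) _
    calc (m+c)^(s+2) = (m+c)^(s+1) * (m+c) := by ring
      _ ≤ (m^(s+1) + (s+1)*c*(m+c)^s) * (m+c) := Nat.mul_le_mul_right _ ih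
      _ = m^(s+1)*m + m^(s+1)*c + (s+1)*c*((m+c)^s*(m+c)) := by ring
      _ = m^(s+2) + m^(s+1)*c + (s+1)*c*(m+c)^(s+1) := by ring
      _ ≤ m^(s+2) + (m+c)^(s+1)*c + (s+1)*c*(m+c)^(s+1) :=
          Nat.add_le_add (Nat.add_le_add_left (Nat.mul_le_mul_right _ hm) _) (le_refl _)
      _ = m^(s+2) + (s+2)*c*(m+c)^(s+1) := by ring

-- erase extraction
lemma eq_erase_of_card (S T : Finset ℕ) (h : S ⊆ T) (hc : S.card + 1 = T.card) :
    ∃ i ∈ T, S = T.erase i := by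
  have h1 : (T \ S).card = 1 := by rw [Finset.card_sdiff_of_subset h]; omega
  obtain ⟨i, hi⟩ := Finset.card_eq_one.mp h1
  have hiT : i ∈ T \ S := hi ▸ Finset.mem_singleton_self i
  refine ⟨i, (Finset.mem_sdiff.mp hiT).1, ?_⟩
  ext x
  simp only [Finset.mem_erase]
  constructor
  · intro hx
    refine ⟨?_, h hx⟩
    rintro rfl
    exact (Finset.mem_sdiff.mp hiT).2 hx
  · rintro ⟨hxi, hxT⟩
    by_contra hxS
    have : x ∈ T \ S := Finset.mem_sdiff.mpr ⟨hxT, hxS⟩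
    rw [hi, Finset.mem_singleton] at this
    exact hxi this

lemma key1 (k d n : ℕ) (hd : 2 ≤ d) (h2d : 2*d < k)
    (hn : 2*(k^3*2^k) + 2*(k*Nat.factorial k) + 8*k + 8 ≤ n) :
    (d+1) * (n-d).choose (k-d) < (d+2) * (n-k).choose (k-d) := by
  have hW : 1 ≤ k^3*2^k := Nat.mul_pos (pow_pos (by omega) 3) (pow_pos (by norm_num) k)
  have hr3 : 3 ≤ k - d := by omega
  set r := k - d with hr
  set F := r.factorial with hF
  have hFpos : 0 < F := Nat.factorial_pos r
  apply Nat.lt_of_mul_lt_mul_left (a := F)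
  have hdesc1 : F * (n-d).choose r = (n-d).descFactorial r :=
    (Nat.descFactorial_eq_factorial_mul_choose _ _).symm
  have hdesc2 : F * (n-k).choose r = (n-k).descFactorial r :=
    (Nat.descFactorial_eq_factorial_mul_choose _ _).symm
  have h1 : F * ((d+1) * (n-d).choose r) = (d+1) * (F * (n-d).choose r) := by ring
  have h2 : F * ((d+2) * (n-k).choose r) = (d+2) * (F * (n-k).choose r) := by ring
  rw [h1, h2, hdesc1, hdesc2]
  set m := n - k + 1 - r with hm
  set c := 2*k - 2*d - 1 with hc
  have hmc : m + c = n - d := by omega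
  have hcm : c ≤ m := by omega
  have hm1 : 1 ≤ m := by omega
  obtain ⟨s, hs⟩ : ∃ s, r = s + 1 := ⟨r - 1, by omega⟩
  have hbig : (d+1)*(s+1)*c*2^s < m := by
    have e1 : d + 1 ≤ k := by omega
    have e2 : s + 1 ≤ k := by omega
    have e3 : c ≤ 2*k := by omega
    have e4 : (2:ℕ)^s ≤ 2^k := Nat.pow_le_pow_right (by norm_num) (by omega)
    have : (d+1)*(s+1)*c*2^s ≤ k*k*(2*k)*2^k :=
      Nat.mul_le_mul (Nat.mul_le_mul (Nat.mul_le_mul e1 e2) e3) e4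
    have heq : k*k*(2*k)*2^k = 2*(k^3*2^k) := by ring
    rw [heq] at this
    omega
  have hmono : (n-k)+1-r = m := by omega
  calc (d+1) * (n-d).descFactorial r ≤ (d+1) * (n-d)^r :=
        Nat.mul_le_mul_left _ (Nat.descFactorial_le_pow _ _)
    _ = (d+1) * (m+c)^(s+1) := by rw [hmc, hs]
    _ ≤ (d+1) * (m^(s+1) + (s+1)*c*(m+c)^s) := Nat.mul_le_mul_left _ (pow_add_le_aux c m s)
    _ = (d+1)*m^(s+1) + ((d+1)*(s+1)*c)*(m+c)^s := by ring
    _ ≤ (d+1)*m^(s+1) + ((d+1)*(s+1)*c)*(2^s*m^s) := by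
        have h2m : (m+c)^s ≤ (2*m)^s := Nat.pow_le_pow_left (by omega) s
        have : (2*m)^s = 2^s * m^s := by rw [mul_pow]
        exact Nat.add_le_add_left (Nat.mul_le_mul_left _ (by rw [← this]; exact h2m)) _
    _ = (d+1)*m^(s+1) + ((d+1)*(s+1)*c*2^s)*m^s := by ring
    _ < (d+1)*m^(s+1) + m*m^s := by
        have hp : 0 < m^s := pow_pos hm1 s
        exact Nat.add_lt_add_left (Nat.mul_lt_mul_of_lt_of_le hbig (le_refl _) hp) _
    _ = (d+2)*m^(s+1) := by ring
    _ ≤ (d+2) * (n-k).descFactorial r := by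
        apply Nat.mul_le_mul_left
        have := Nat.pow_sub_le_descFactorial (n-k) r
        rw [hmono, hs] at this
        rw [hs]; exact this

lemma key2 (k d n : ℕ) (hd : 2 ≤ d) (h2d : 2*d < k)
    (hn : 2*(k^3*2^k) + 2*(k*Nat.factorial k) + 8*k + 8 ≤ n) :
    (d-1)*(n-k-1) < (n-k-1).choose (k-d) := by
  have hW : 1 ≤ k^3*2^k := Nat.mul_pos (pow_pos (by omega) 3) (pow_pos (by norm_num) k)
  have hG : 1 ≤ k*Nat.factorial k := Nat.mul_pos (by omega) (Nat.factorial_pos k)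
  have hr3 : 3 ≤ k - d := by omega
  set r := k - d with hr
  set F := r.factorial with hF
  have hFpos : 0 < F := Nat.factorial_pos r
  apply Nat.lt_of_mul_lt_mul_left (a := F)
  have hdesc : F * (n-k-1).choose r = (n-k-1).descFactorial r :=
    (Nat.descFactorial_eq_factorial_mul_choose _ _).symm
  rw [hdesc]
  set t := n - k - r with ht
  have htk : k ≤ t := by omega
  have ht1 : 1 ≤ t := by omega
  have hG2 : 2*(k*Nat.factorial k) < t := by omega
  have hFk : F ≤ Nat.factorial k := Nat.factorial_le (by omega)
  have step1 : F * ((d-1)*(n-k-1)) ≤ 2*(k*Nat.factorial k)*t := by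
    have e1 : d - 1 ≤ k := by omega
    have e2 : n - k - 1 ≤ 2*t := by omega
    calc F * ((d-1)*(n-k-1)) ≤ Nat.factorial k * (k*(2*t)) :=
          Nat.mul_le_mul hFk (Nat.mul_le_mul e1 e2)
      _ = 2*(k*Nat.factorial k)*t := by ring
  have step2 : 2*(k*Nat.factorial k)*t < t*t*t := by
    have htt : t ≤ t*t := Nat.le_mul_of_pos_left t ht1
    have h2 : 2*(k*Nat.factorial k) < t*t := by omega
    exact Nat.mul_lt_mul_of_lt_of_le h2 (le_refl t) (by omega)
  have step3 : t*t*t ≤ (n-k-1).descFactorial r := by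
    have hpow := Nat.pow_sub_le_descFactorial (n-k-1) r
    have heq : (n-k-1)+1-r = t := by omega
    rw [heq] at hpow
    calc t*t*t = t^3 := by ring
      _ ≤ t^r := Nat.pow_le_pow_right ht1 hr3
      _ ≤ _ := hpow
  omega

lemma cardA_eq (n k d : ℕ) (hd : 2 ≤ d) (hdk : d < k) (hkn : k + 2 ≤ n) :
    (((Finset.Icc 1 n).powersetCard k).filter
        (fun A => d ≤ (A ∩ Finset.Icc 1 (d + 1)).card)).card
      = (n-(d+1)).choose (k-(d+1)) + (d+1) * ((n-(d+1)).choose (k-d)) := by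
  set T1 := Finset.Icc 1 (d+1) with hT1
  have hT1card : T1.card = d+1 := by rw [hT1, Nat.card_Icc]; omega
  have hT1sub : T1 ⊆ Finset.Icc 1 n := by
    intro x hx; rw [hT1, Finset.mem_Icc] at hx; rw [Finset.mem_Icc]; omega
  have hfib : ∀ A ∈ (((Finset.Icc 1 n).powersetCard k).filter
      (fun A => d ≤ (A ∩ T1).card)), A ∩ T1 ∈ insert T1 (T1.powersetCard d) := by
    intro A hA
    rw [Finset.mem_filter] at hA
    have hsub : A ∩ T1 ⊆ T1 := Finset.inter_subset_right
    have hle : (A ∩ T1).card ≤ d+1 := hT1card ▸ Finset.card_le_card hsub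
    rcases Nat.lt_or_ge (A ∩ T1).card (d+1) with h | h
    · exact Finset.mem_insert_of_mem (Finset.mem_powersetCard.mpr ⟨hsub, by omega⟩)
    · have : A ∩ T1 = T1 := Finset.eq_of_subset_of_card_le hsub (by omega)
      rw [this]; exact Finset.mem_insert_self _ _
  rw [Finset.card_eq_sum_card_fiberwise hfib]
  have hconst : ∀ S ∈ insert T1 (T1.powersetCard d),
      ((((Finset.Icc 1 n).powersetCard k).filter
        (fun A => d ≤ (A ∩ T1).card)).filter (fun A => A ∩ T1 = S)).card
      = (n-(d+1)).choose (k - S.card) := by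
    intro S hS
    have hScard : S ⊆ T1 ∧ (S.card = d ∨ S.card = d+1) := by
      rcases Finset.mem_insert.mp hS with rfl | h
      · exact ⟨Finset.Subset.refl _, Or.inr hT1card⟩
      · have := Finset.mem_powersetCard.mp h; exact ⟨this.1, Or.inl this.2⟩
    have heq : (((Finset.Icc 1 n).powersetCard k).filter
        (fun A => d ≤ (A ∩ T1).card)).filter (fun A => A ∩ T1 = S)
        = ((Finset.Icc 1 n).powersetCard k).filter (fun A => A ∩ T1 = S) := by
      ext A
      simp only [Finset.mem_filter]
      constructor
      · rintro ⟨⟨h1, _⟩, h2⟩; exact ⟨h1, h2⟩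
      · rintro ⟨h1, h2⟩
        refine ⟨⟨h1, ?_⟩, h2⟩
        rw [h2]; omega
    rw [heq, count_fiber n k S T1 hScard.1 hT1sub (by omega), hT1card]
  rw [Finset.sum_congr rfl hconst]
  have hnotmem : T1 ∉ T1.powersetCard d := by
    intro h
    have := (Finset.mem_powersetCard.mp h).2
    omega
  rw [Finset.sum_insert hnotmem, hT1card]
  have hrest : ∑ S ∈ T1.powersetCard d, (n-(d+1)).choose (k - S.card)
      = (d+1) * ((n-(d+1)).choose (k-d)) := by
    rw [Finset.sum_congr rfl (fun S hS => by
      rw [(Finset.mem_powersetCard.mp hS).2])]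
    rw [Finset.sum_const, Finset.card_powersetCard, hT1card, Nat.choose_succ_self_right,
      smul_eq_mul]
  rw [hrest]

lemma card_subset_meet (n k d e : ℕ) (hd : 1 ≤ d) (hde : d ≤ e) (he : e ≤ n)
    (hdk : d - 1 ≤ k) (hke : k ≤ e) :
    (((Finset.Icc 1 n).powersetCard k).filter
        (fun A => Finset.Icc 1 (d-1) ⊆ A ∧ (A ∩ Finset.Icc d e).Nonempty)).card
      + (n - e).choose (k-(d-1)) = (n-(d-1)).choose (k-(d-1)) := by
  set pw := (Finset.Icc 1 n).powersetCard k with hpw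
  set S0 := Finset.Icc 1 (d-1) with hS0
  have hS0card : S0.card = d-1 := by rw [hS0, Nat.card_Icc]; omega
  have hS0sub : S0 ⊆ Finset.Icc 1 n := by
    intro x hx; rw [hS0, Finset.mem_Icc] at hx; rw [Finset.mem_Icc]; omega
  have hPcount : (pw.filter (fun A => S0 ⊆ A)).card = (n-(d-1)).choose (k-(d-1)) := by
    have heq : pw.filter (fun A => S0 ⊆ A) = pw.filter (fun A => A ∩ S0 = S0) := by
      ext A
      simp only [Finset.mem_filter, Finset.inter_eq_right]
    rw [heq, count_fiber n k S0 S0 (Finset.Subset.refl _) hS0sub (by omega), hS0card]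
  have fact1 : ∀ A : Finset ℕ, (S0 ⊆ A ∧ ¬(A ∩ Finset.Icc d e).Nonempty)
      ↔ A ∩ Finset.Icc 1 e = S0 := by
    intro A
    simp only [Finset.not_nonempty_iff_eq_empty]
    constructor
    · rintro ⟨h2, h3⟩
      ext x
      simp only [Finset.mem_inter, Finset.mem_Icc, hS0]
      constructor
      · rintro ⟨hxA, hx1, hxe⟩
        refine ⟨hx1, ?_⟩
        by_contra hc
        have : x ∈ A ∩ Finset.Icc d e := by
          rw [Finset.mem_inter, Finset.mem_Icc]; exact ⟨hxA, by omega, hxe⟩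
        rw [h3] at this
        exact absurd this (Finset.notMem_empty x)
      · rintro ⟨hx1, hxd⟩
        have hxA : x ∈ A := h2 (by rw [hS0, Finset.mem_Icc]; exact ⟨hx1, hxd⟩)
        exact ⟨hxA, hx1, by omega⟩
    · rintro h2
      refine ⟨?_, ?_⟩
      · intro x hx
        rw [hS0, Finset.mem_Icc] at hx
        have : x ∈ A ∩ Finset.Icc 1 e := by
          rw [h2, hS0, Finset.mem_Icc]; exact hx
        exact (Finset.mem_inter.mp this).1
      · ext x
        simp only [Finset.mem_inter, Finset.mem_Icc, Finset.notMem_empty, iff_false,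
          not_and]
        intro hxA hxd hxe
        have : x ∈ A ∩ Finset.Icc 1 e := by
          rw [Finset.mem_inter, Finset.mem_Icc]; exact ⟨hxA, by omega, hxe⟩
        rw [h2, hS0, Finset.mem_Icc] at this
        omega
  have hZ : pw.filter (fun A => S0 ⊆ A)
      = pw.filter (fun A => S0 ⊆ A ∧ (A ∩ Finset.Icc d e).Nonempty)
        ∪ pw.filter (fun A => A ∩ Finset.Icc 1 e = S0) := by
    ext A
    simp only [Finset.mem_filter, Finset.mem_union]
    constructor
    · rintro ⟨h1, hP⟩
      by_cases hQ : (A ∩ Finset.Icc d e).Nonempty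
      · exact Or.inl ⟨h1, hP, hQ⟩
      · exact Or.inr ⟨h1, (fact1 A).mp ⟨hP, hQ⟩⟩
    · rintro (⟨h1, hP, _⟩ | ⟨h1, hY⟩)
      · exact ⟨h1, hP⟩
      · exact ⟨h1, ((fact1 A).mpr hY).1⟩
  have hdisj : Disjoint (pw.filter (fun A => S0 ⊆ A ∧ (A ∩ Finset.Icc d e).Nonempty))
      (pw.filter (fun A => A ∩ Finset.Icc 1 e = S0)) := by
    rw [Finset.disjoint_left]
    intro A hA hA'
    rw [Finset.mem_filter] at hA hA'
    exact ((fact1 A).mpr hA'.2).2 hA.2.2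
  have h5 : (pw.filter (fun A => A ∩ Finset.Icc 1 e = S0)).card
      = (n - e).choose (k-(d-1)) := by
    have hsub : S0 ⊆ Finset.Icc 1 e := by
      intro x hx; rw [hS0, Finset.mem_Icc] at hx; rw [Finset.mem_Icc]; omega
    rw [count_fiber n k S0 (Finset.Icc 1 e) hsub
      (by intro x hx; rw [Finset.mem_Icc] at hx ⊢; omega) (by omega), Nat.card_Icc, hS0card]
    congr 1
  rw [← hPcount, hZ, Finset.card_union_of_disjoint hdisj, h5]

lemma cardB1_eq (n k d : ℕ) (hd : 2 ≤ d) (hdk : d < k) (hkn : k + 2 ≤ n) :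
    (((Finset.Icc 1 n).powersetCard k).filter
        (fun B => (B ∩ Finset.Icc 1 (d-1)).card = d - 2 ∧ Finset.Icc d k ⊆ B)).card
      = (d-1) * (n-k) := by
  set pw := (Finset.Icc 1 n).powersetCard k with hpw
  set 𝒯 := (Finset.Icc 1 (d-1)).image (fun i => (Finset.Icc 1 k).erase i) with hT
  have hfib : ∀ B ∈ pw.filter
      (fun B => (B ∩ Finset.Icc 1 (d-1)).card = d - 2 ∧ Finset.Icc d k ⊆ B),
      B ∩ Finset.Icc 1 k ∈ 𝒯 := by
    intro B hB
    rw [Finset.mem_filter] at hB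
    obtain ⟨hBpw, hBc, hBsup⟩ := hB
    have hsub : B ∩ Finset.Icc 1 (d-1) ⊆ Finset.Icc 1 (d-1) := Finset.inter_subset_right
    have hcard : (B ∩ Finset.Icc 1 (d-1)).card + 1 = (Finset.Icc 1 (d-1)).card := by
      rw [Nat.card_Icc]; omega
    obtain ⟨i, hiT, hie⟩ := eq_erase_of_card _ _ hsub hcard
    rw [Finset.mem_Icc] at hiT
    rw [hT, Finset.mem_image]
    refine ⟨i, by rw [Finset.mem_Icc]; exact hiT, ?_⟩
    ext x
    simp only [Finset.mem_erase, Finset.mem_inter, Finset.mem_Icc]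
    constructor
    · rintro ⟨hxi, hx1, hxk⟩
      rcases Nat.lt_or_ge x d with h | h
      · have : x ∈ B ∩ Finset.Icc 1 (d-1) := by
          rw [hie, Finset.mem_erase, Finset.mem_Icc]; exact ⟨hxi, hx1, by omega⟩
        exact ⟨(Finset.mem_inter.mp this).1, hx1, hxk⟩
      · exact ⟨hBsup (by rw [Finset.mem_Icc]; exact ⟨h, hxk⟩), hx1, hxk⟩
    · rintro ⟨hxB, hx1, hxk⟩
      refine ⟨?_, hx1, hxk⟩
      rcases Nat.lt_or_ge x d with h | h
      · have : x ∈ B ∩ Finset.Icc 1 (d-1) := by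
          rw [Finset.mem_inter, Finset.mem_Icc]; exact ⟨hxB, hx1, by omega⟩
        rw [hie, Finset.mem_erase] at this
        exact this.1
      · omega
  rw [Finset.card_eq_sum_card_fiberwise hfib]
  have hconst : ∀ S ∈ 𝒯,
      ((pw.filter (fun B => (B ∩ Finset.Icc 1 (d-1)).card = d - 2 ∧ Finset.Icc d k ⊆ B)).filter
        (fun B => B ∩ Finset.Icc 1 k = S)).card = n - k := by
    intro S hS
    rw [hT, Finset.mem_image] at hS
    obtain ⟨i, hi, rfl⟩ := hS
    rw [Finset.mem_Icc] at hi
    have hik : i ∈ Finset.Icc 1 k := by rw [Finset.mem_Icc]; omega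
    have heq : (pw.filter
        (fun B => (B ∩ Finset.Icc 1 (d-1)).card = d - 2 ∧ Finset.Icc d k ⊆ B)).filter
        (fun B => B ∩ Finset.Icc 1 k = (Finset.Icc 1 k).erase i)
        = pw.filter (fun B => B ∩ Finset.Icc 1 k = (Finset.Icc 1 k).erase i) := by
      rw [Finset.filter_filter]
      ext B
      simp only [Finset.mem_filter]
      constructor
      · rintro ⟨h1, _, h3⟩; exact ⟨h1, h3⟩
      · rintro ⟨h1, h2⟩
        refine ⟨h1, ⟨?_, ?_⟩, h2⟩
        · have : B ∩ Finset.Icc 1 (d-1) = (Finset.Icc 1 (d-1)).erase i := by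
            ext x
            simp only [Finset.mem_inter, Finset.mem_Icc, Finset.mem_erase]
            constructor
            · rintro ⟨hxB, hx1, hxd⟩
              have : x ∈ B ∩ Finset.Icc 1 k := by
                rw [Finset.mem_inter, Finset.mem_Icc]; exact ⟨hxB, hx1, by omega⟩
              rw [h2, Finset.mem_erase] at this
              exact ⟨this.1, hx1, hxd⟩
            · rintro ⟨hxi, hx1, hxd⟩
              have : x ∈ B ∩ Finset.Icc 1 k := by
                rw [h2, Finset.mem_erase, Finset.mem_Icc]; exact ⟨hxi, hx1, by omega⟩
              exact ⟨(Finset.mem_inter.mp this).1, hx1, hxd⟩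
          rw [this, Finset.card_erase_of_mem (by rw [Finset.mem_Icc]; omega), Nat.card_Icc]
          omega
        · intro x hx
          rw [Finset.mem_Icc] at hx
          have : x ∈ B ∩ Finset.Icc 1 k := by
            rw [h2, Finset.mem_erase, Finset.mem_Icc]
            exact ⟨by omega, by omega, hx.2⟩
          exact (Finset.mem_inter.mp this).1
    rw [heq, count_fiber n k ((Finset.Icc 1 k).erase i) (Finset.Icc 1 k)
      (Finset.erase_subset _ _)
      (by intro x hx; rw [Finset.mem_Icc] at hx ⊢; omega)
      (by rw [Finset.card_erase_of_mem hik, Nat.card_Icc]; omega)]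
    rw [Finset.card_erase_of_mem hik, Nat.card_Icc]
    have h1 : k - (k + 1 - 1 - 1) = 1 := by omega
    have h2 : n - (k + 1 - 1) = n - k := by omega
    rw [h1, h2, Nat.choose_one_right]
  rw [Finset.sum_congr rfl hconst, Finset.sum_const, smul_eq_mul]
  have hinj : Set.InjOn (fun i => (Finset.Icc 1 k).erase i) (Finset.Icc 1 (d-1)) := by
    intro i hi j hj hij
    rw [Finset.mem_coe, Finset.mem_Icc] at hi hj
    by_contra hne
    have hij' : (Finset.Icc 1 k).erase i = (Finset.Icc 1 k).erase j := hij
    have : i ∈ (Finset.Icc 1 k).erase j := by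
      rw [Finset.mem_erase, Finset.mem_Icc]; exact ⟨hne, by omega, by omega⟩
    rw [← hij'] at this
    exact (Finset.notMem_erase i _) this
  have : 𝒯.card = d - 1 := by
    rw [hT, Finset.card_image_of_injOn hinj, Nat.card_Icc]
    omega
  rw [this]


theorem A_le_B_le_H (k d : ℕ) (hd : 2 ≤ d) (hdk : d < k) (h2d : 2 * d < k) :
    ∃ N : ℕ, ∀ n ≥ N,
      let Afam := (((Finset.Icc 1 n).powersetCard k).filter
        (fun A => d ≤ (A ∩ Finset.Icc 1 (d + 1)).card))
      let Bfam := ((((Finset.Icc 1 n).powersetCard k).filter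
          (fun B => (B ∩ Finset.Icc 1 (d - 1)).card = d - 2 ∧ Finset.Icc d k ⊆ B)) ∪
        (((Finset.Icc 1 n).powersetCard k).filter
          (fun B => Finset.Icc 1 (d - 1) ⊆ B ∧ (B ∩ Finset.Icc d k).Nonempty)))
      let Hfam := ((((Finset.Icc 1 n).powersetCard k).filter
          (fun A => Finset.Icc 1 (d - 1) ⊆ A ∧ (A ∩ Finset.Icc d (k + 1)).Nonempty)) ∪
        (Finset.Icc 1 (d - 1)).image (fun i => (Finset.Icc 1 (k + 1)).erase i))
      Afam.card ≤ Bfam.card ∧ Bfam.card ≤ Hfam.card ∧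
        ((Afam.card = Bfam.card ∧ Bfam.card = Hfam.card) ↔ (k = 3 ∧ d = 2)) := by
  refine ⟨2*(k^3*2^k) + 2*(k*Nat.factorial k) + 8*k + 8, ?_⟩
  intro n hn
  intro Afam Bfam Hfam
  have hkey1 := key1 k d n hd h2d hn
  have hkey2 := key2 k d n hd h2d hn
  have hW1 : 1 ≤ k^3*2^k :=
    Nat.mul_pos (pow_pos (by omega) 3) (pow_pos (by norm_num) k)
  have hF1 : 1 ≤ k*Nat.factorial k := Nat.mul_pos (by omega) (Nat.factorial_pos k)
  have hkn : 4*k + 8 ≤ n := by linarith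
  -- cardinality computations
  have hAeq : Afam.card = (n-(d+1)).choose (k-(d+1)) + (d+1) * ((n-(d+1)).choose (k-d)) :=
    cardA_eq n k d hd hdk (by omega)
  have hB1 : (((Finset.Icc 1 n).powersetCard k).filter
      (fun B => (B ∩ Finset.Icc 1 (d - 1)).card = d - 2 ∧ Finset.Icc d k ⊆ B)).card
      = (d-1) * (n-k) := cardB1_eq n k d hd hdk (by omega)
  have hB2 : (((Finset.Icc 1 n).powersetCard k).filter
      (fun B => Finset.Icc 1 (d - 1) ⊆ B ∧ (B ∩ Finset.Icc d k).Nonempty)).card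
      + (n - k).choose (k-(d-1)) = (n-(d-1)).choose (k-(d-1)) :=
    card_subset_meet n k d k (by omega) (by omega) (by omega) (by omega) (by omega)
  have hH1 : (((Finset.Icc 1 n).powersetCard k).filter
      (fun A => Finset.Icc 1 (d - 1) ⊆ A ∧ (A ∩ Finset.Icc d (k + 1)).Nonempty)).card
      + (n - (k+1)).choose (k-(d-1)) = (n-(d-1)).choose (k-(d-1)) :=
    card_subset_meet n k d (k+1) (by omega) (by omega) (by omega) (by omega) (by omega)
  -- Bfam card
  have hdisjB : Disjoint
      (((Finset.Icc 1 n).powersetCard k).filter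
        (fun B => (B ∩ Finset.Icc 1 (d - 1)).card = d - 2 ∧ Finset.Icc d k ⊆ B))
      (((Finset.Icc 1 n).powersetCard k).filter
        (fun B => Finset.Icc 1 (d - 1) ⊆ B ∧ (B ∩ Finset.Icc d k).Nonempty)) := by
    rw [Finset.disjoint_left]
    intro B h1 h2
    rw [Finset.mem_filter] at h1 h2
    have hBi : B ∩ Finset.Icc 1 (d-1) = Finset.Icc 1 (d-1) :=
      Finset.inter_eq_right.mpr h2.2.1
    have := h1.2.1
    rw [hBi, Nat.card_Icc] at this
    omega
  have hBcard : Bfam.card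
      = (((Finset.Icc 1 n).powersetCard k).filter
          (fun B => (B ∩ Finset.Icc 1 (d - 1)).card = d - 2 ∧ Finset.Icc d k ⊆ B)).card
        + (((Finset.Icc 1 n).powersetCard k).filter
          (fun B => Finset.Icc 1 (d - 1) ⊆ B ∧ (B ∩ Finset.Icc d k).Nonempty)).card :=
    Finset.card_union_of_disjoint hdisjB
  rw [hB1] at hBcard
  -- Hfam card
  have hinj : Set.InjOn (fun i => (Finset.Icc 1 (k+1)).erase i) (Finset.Icc 1 (d-1)) := by
    intro i hi j hj hij
    rw [Finset.mem_coe, Finset.mem_Icc] at hi hj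
    by_contra hne
    have hij' : (Finset.Icc 1 (k+1)).erase i = (Finset.Icc 1 (k+1)).erase j := hij
    have : i ∈ (Finset.Icc 1 (k+1)).erase j := by
      rw [Finset.mem_erase, Finset.mem_Icc]; exact ⟨hne, by omega, by omega⟩
    rw [← hij'] at this
    exact (Finset.notMem_erase i _) this
  have hH2card : ((Finset.Icc 1 (d - 1)).image
      (fun i => (Finset.Icc 1 (k + 1)).erase i)).card = d - 1 := by
    rw [Finset.card_image_of_injOn hinj, Nat.card_Icc]
    omega
  have hdisjH : Disjoint
      (((Finset.Icc 1 n).powersetCard k).filter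
        (fun A => Finset.Icc 1 (d - 1) ⊆ A ∧ (A ∩ Finset.Icc d (k + 1)).Nonempty))
      ((Finset.Icc 1 (d - 1)).image (fun i => (Finset.Icc 1 (k + 1)).erase i)) := by
    rw [Finset.disjoint_left]
    intro A h1 h2
    rw [Finset.mem_filter] at h1
    rw [Finset.mem_image] at h2
    obtain ⟨i, hi, rfl⟩ := h2
    rw [Finset.mem_Icc] at hi
    have : i ∈ (Finset.Icc 1 (k+1)).erase i :=
      h1.2.1 (by rw [Finset.mem_Icc]; omega)
    exact (Finset.notMem_erase i _) this
  have hHcard : Hfam.card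
      = (((Finset.Icc 1 n).powersetCard k).filter
          (fun A => Finset.Icc 1 (d - 1) ⊆ A ∧ (A ∩ Finset.Icc d (k + 1)).Nonempty)).card
        + (d-1) := by
    rw [show Hfam.card = _ from Finset.card_union_of_disjoint hdisjH, hH2card]
  -- arithmetic
  have e3 : k-(d-1) = (k-d)+1 := by omega
  rw [e3] at hB2 hH1
  obtain ⟨M, hM⟩ : ∃ M, n - k - 1 = M := ⟨_, rfl⟩
  have hM' : n - k = M + 1 := by omega
  have hPas1 : (n-k).choose ((k-d)+1) = M.choose (k-d) + M.choose ((k-d)+1) := by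
    rw [hM']; exact Nat.choose_succ_succ _ _
  rw [hM] at hkey2
  have hsplit : (d-1)*(n-k) = (d-1)*M + (d-1) := by rw [hM']; ring
  have hMk : n - (k+1) = M := by omega
  rw [hMk] at hH1
  -- B < H
  have hBH : Bfam.card < Hfam.card := by linarith
  -- A < B
  have hPas2 : (n-(d+1)).choose (k-(d+1)) + (n-(d+1)).choose (k-d)
      = (n-d).choose (k-d) := by
    have ha : n - d = (n-(d+1))+1 := by omega
    have hb : k - d = (k-(d+1))+1 := by omega
    rw [ha, hb, Nat.choose_succ_succ]
  have hmono : (n-(d+1)).choose (k-d) ≤ (n-d).choose (k-d) :=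
    Nat.choose_le_choose _ (by omega)
  have h1 : Afam.card ≤ (d+1) * (n-d).choose (k-d) := by
    calc Afam.card = ((n-(d+1)).choose (k-(d+1)) + (n-(d+1)).choose (k-d))
          + d * ((n-(d+1)).choose (k-d)) := by rw [hAeq]; ring
      _ ≤ (n-d).choose (k-d) + d * (n-d).choose (k-d) :=
          Nat.add_le_add (le_of_eq hPas2) (Nat.mul_le_mul_left d hmono)
      _ = (d+1) * (n-d).choose (k-d) := by ring
  have h2 : (d+2) * (n-k).choose (k-d) ≤ ((k-d)+1) * (n-k).choose (k-d) :=
    Nat.mul_le_mul_right _ (by omega)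
  have h3 : ((k-d)+1) * (n-k).choose (k-d) ≤ Bfam.card := by
    have hca := choose_add_le ((k-d)+1) (n-k) (k-d)
    have he : n - k + ((k-d)+1) = n - (d-1) := by omega
    rw [he] at hca
    linarith
  have hAB : Afam.card < Bfam.card :=
    lt_of_le_of_lt h1 (lt_of_lt_of_le hkey1 (le_trans h2 h3))
  refine ⟨le_of_lt hAB, le_of_lt hBH, ?_, ?_⟩
  · rintro ⟨hab, -⟩
    exact absurd hab (Nat.ne_of_lt hAB)
  · rintro ⟨hk3, hd2⟩
    exfalso
    omega
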